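/- Let D ⊆ ℂ be a domain. A sequence {f_ν} of holomorphic curves on D into ℙⁿ converges uniformly on compact subsets of D to a holomorphic curve f : D → ℙⁿ if and only if for every a ∈ D there exists an open neighbourhood U of a in D and reduced representations f̂_ν = (f_{ν,0}, …, f_{ν,n}) of f_ν on U such that each sequence {f_{ν,l}}_{ν} (l = 0, …, n) converges uniformly on compact subsets of U to a holomorphic function f_l on U, and (f₀, …, f_n) is a reduced representation of f on U. -/

import Mathlib

open Filter Topology
open scoped LinearAlgebra.Projectivization

noncomputable section

/-- `n`-dimensional complex projective space. -/
abbrev Pn (n : ℕ) := ℙ ℂ (Fin (n + 1) → ℂ)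

/-- The quotient topology on complex projective space. -/
instance (n : ℕ) : TopologicalSpace (Pn n) :=
  inferInstanceAs (TopologicalSpace (Quotient (projectivizationSetoid ℂ (Fin (n + 1) → ℂ))))

/-- The hyperplane in `Pn n` with coefficient vector `α`. -/
def hyp (n : ℕ) (α : Fin (n + 1) → ℂ) : Set (Pn n) :=
  {p | ∑ i, α i * p.rep i = 0}

/-- `q` coefficient vectors are in general position: every `(n+1)` of them form an
invertible matrix. -/
def InGenPos {q n : ℕ} (α : Fin q → Fin (n + 1) → ℂ) : Prop :=
  ∀ e : Fin (n + 1) → Fin q, StrictMono e → (Matrix.of fun l i => α (e l) i).det ≠ 0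

/-- The quantity `𝒟(H₁, …, H_q)`: the product over all `(n+1)`-element subsets
(ordered increasingly) of the absolute values of the corresponding determinants. -/
def genPosProd {q n : ℕ} (α : Fin q → Fin (n + 1) → ℂ) : ℝ :=
  ∏ e ∈ @Finset.filter _ (fun e : Fin (n + 1) → Fin q => StrictMono e)
      (Classical.decPred _) Finset.univ,
    ‖(Matrix.of fun l i => α (e l) i).det‖

/-- `F` is a reduced representation of the holomorphic curve `f` on `U`. -/
structure IsRedRep {E : Type*} [NormedAddCommGroup E] [NormedSpace ℂ E]
    (n : ℕ) (U : Set E) (f : E → Pn n) (F : E → Fin (n + 1) → ℂ) : Prop where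
  holo : ∀ i, DifferentiableOn ℂ (fun z => F z i) U
  nonzero : ∀ z ∈ U, F z ≠ 0
  repr : ∀ z, (hz : z ∈ U) → f z = Projectivization.mk ℂ (F z) (nonzero z hz)

/-- `f` is a holomorphic curve on `D` into `Pn n`. -/
def IsHolCurve {E : Type*} [NormedAddCommGroup E] [NormedSpace ℂ E]
    (n : ℕ) (D : Set E) (f : E → Pn n) : Prop :=
  ∀ a ∈ D, ∃ U : Set E, IsOpen U ∧ a ∈ U ∧ U ⊆ D ∧ ∃ F, IsRedRep n U f F

/-- Convergence, uniformly on compact subsets of `D` (phrased via the compact-open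
topology, which agrees with uniform convergence on compacta for the compact
Hausdorff target `Pn n`). -/
def TendstoOnCompacts {E X : Type*} [TopologicalSpace E] [TopologicalSpace X]
    (D : Set E) (g : ℕ → E → X) (f : E → X) : Prop :=
  ∀ K : Set E, K ⊆ D → IsCompact K → ∀ V : Set X, IsOpen V → f '' K ⊆ V →
    ∀ᶠ ν in atTop, (g ν) '' K ⊆ V

/-- A family of holomorphic maps into `Pn n` is normal on `D` if every sequence has a
subsequence converging uniformly on compact subsets of `D` to a holomorphic map. -/
def NormalFamilyOn {E : Type*} [NormedAddCommGroup E] [NormedSpace ℂ E] (n : ℕ)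
    (D : Set E) (F : Set (E → Pn n)) : Prop :=
  ∀ f : ℕ → E → Pn n, (∀ ν, f ν ∈ F) →
    ∃ φ : ℕ → ℕ, StrictMono φ ∧ ∃ g : E → Pn n, IsHolCurve n D g ∧
      TendstoOnCompacts D (fun ν => f (φ ν)) g

/-- `‖f̂(z)‖ = max_l |f_l(z)|` for a (reduced) representation. -/
def repNorm {E : Type*} (n : ℕ) (F : E → Fin (n + 1) → ℂ) (z : E) : ℝ :=
  Finset.univ.sup' Finset.univ_nonempty fun l => ‖F z l‖

/-- `g` is a derived holomorphic map `∇f` of `f` on `D`. -/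
def IsDerivedCurve (n : ℕ) (D : Set ℂ) (f g : ℂ → Pn n) : Prop :=
  ∃ F : ℂ → Fin (n + 1) → ℂ, IsRedRep n D f F ∧ (∃ z ∈ D, F z 0 ≠ 0) ∧
    ∃ d : ℂ → ℂ, DifferentiableOn ℂ d D ∧
      ∃ G : ℂ → Fin (n + 1) → ℂ, IsRedRep n D g G ∧
        (∀ z ∈ D, G z 0 * d z = F z 0 ^ 2) ∧
        (∀ z ∈ D, ∀ l : Fin n, G z l.succ * d z =
          F z 0 * deriv (fun w => F w l.succ) z - deriv (fun w => F w 0) z * F z l.succ)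

/-- Two holomorphic curves share the hyperplane with coefficient vector `α` on `D`. -/
def SharesHyp (n : ℕ) (D : Set ℂ) (f g : ℂ → Pn n) (α : Fin (n + 1) → ℂ) : Prop :=
  {z ∈ D | f z ∈ hyp n α} = {z ∈ D | g z ∈ hyp n α} ∧
    ∀ z ∈ D, f z ∈ hyp n α → f z = g z

/-- `a` defines a moving hyperplane on `D`: holomorphic coefficients with no common zero. -/
def IsMovingHyperplane (n : ℕ) (D : Set ℂ) (a : ℂ → Fin (n + 1) → ℂ) : Prop :=
  (∀ i, DifferentiableOn ℂ (fun z => a z i) D) ∧ ∀ z ∈ D, a z ≠ 0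

/-- The holomorphic curve `H̃` associated with a moving hyperplane. -/
def tildeCurve (n : ℕ) (a : ℂ → Fin (n + 1) → ℂ) (z : ℂ) : Pn n :=
  if h : a z ≠ 0 then Projectivization.mk ℂ (a z) h
  else Classical.arbitrary (Pn n)


namespace Stmt9Aux

def chart {n : ℕ} (l₀ l : Fin (n+1)) (p : Pn n) : ℂ := p.rep l / p.rep l₀

lemma exists_unit_smul {n : ℕ} {v : Fin (n+1) → ℂ} (hv : v ≠ 0) :
    ∃ a : ℂˣ, a • v = (Projectivization.mk ℂ v hv).rep := by
  have h := Projectivization.mk_rep (Projectivization.mk ℂ v hv)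
  rw [Projectivization.mk_eq_mk_iff] at h
  exact h

lemma chart_mk {n : ℕ} {v : Fin (n+1) → ℂ} (hv : v ≠ 0) (l₀ l : Fin (n+1)) :
    chart l₀ l (Projectivization.mk ℂ v hv) = v l / v l₀ := by
  obtain ⟨a, ha⟩ := exists_unit_smul hv
  have hl : ∀ m, (Projectivization.mk ℂ v hv).rep m = (a : ℂ) * v m := by
    intro m; rw [← ha]; rfl
  rw [chart, hl, hl, mul_div_mul_left _ _ a.ne_zero]

lemma rep_ne_zero_iff {n : ℕ} {v : Fin (n+1) → ℂ} (hv : v ≠ 0) (l₀ : Fin (n+1)) :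
    (Projectivization.mk ℂ v hv).rep l₀ ≠ 0 ↔ v l₀ ≠ 0 := by
  obtain ⟨a, ha⟩ := exists_unit_smul hv
  have hl : (Projectivization.mk ℂ v hv).rep l₀ = (a : ℂ) * v l₀ := by rw [← ha]; rfl
  rw [hl, mul_ne_zero_iff]
  simp [a.ne_zero]

lemma chart_self {n : ℕ} (p : Pn n) (l₀ : Fin (n+1)) (h0 : p.rep l₀ ≠ 0) :
    chart l₀ l₀ p = 1 := div_self h0

lemma chart_ne_zero {n : ℕ} (p : Pn n) (l₀ : Fin (n+1)) (h0 : p.rep l₀ ≠ 0) :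
    (fun l => chart l₀ l p) ≠ 0 := by
  intro h
  have := congrFun h l₀
  rw [chart_self p l₀ h0] at this
  exact one_ne_zero this

lemma mk_chart {n : ℕ} (p : Pn n) (l₀ : Fin (n+1)) (h0 : p.rep l₀ ≠ 0) :
    Projectivization.mk ℂ (fun l => chart l₀ l p) (chart_ne_zero p l₀ h0) = p := by
  conv_rhs => rw [← Projectivization.mk_rep p]
  rw [Projectivization.mk_eq_mk_iff]
  refine ⟨(Units.mk0 (p.rep l₀) h0)⁻¹, ?_⟩
  funext l
  simp [chart, div_eq_inv_mul]
  rfl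

lemma isOpen_Pn_iff {n : ℕ} (S : Set (Pn n)) :
    IsOpen S ↔ IsOpen {v : Fin (n+1) → ℂ | ∃ h : v ≠ 0, Projectivization.mk ℂ v h ∈ S} := by
  have hq : Topology.IsQuotientMap
      (fun v : {v : Fin (n+1) → ℂ // v ≠ 0} =>
        (Quotient.mk (projectivizationSetoid ℂ (Fin (n+1) → ℂ)) v : Pn n)) :=
    isQuotientMap_quotient_mk'
  have himg : Subtype.val '' ((fun v : {v : Fin (n+1) → ℂ // v ≠ 0} =>
      (Quotient.mk (projectivizationSetoid ℂ (Fin (n+1) → ℂ)) v : Pn n)) ⁻¹' S)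
      = {v : Fin (n+1) → ℂ | ∃ h : v ≠ 0, Projectivization.mk ℂ v h ∈ S} := by
    ext v
    constructor
    · rintro ⟨⟨w, hw⟩, hwS, rfl⟩
      exact ⟨hw, hwS⟩
    · rintro ⟨hv, hS⟩
      exact ⟨⟨v, hv⟩, hS, rfl⟩
  refine (hq.isOpen_preimage (s := S)).symm.trans ?_
  rw [← himg]
  constructor
  · intro h
    exact (isOpen_compl_singleton (x := (0 : Fin (n+1) → ℂ))).isOpenMap_subtype_val _ h
  · intro h
    have heq := (Set.preimage_image_eq ((fun v : {v : Fin (n+1) → ℂ // v ≠ 0} =>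
        (Quotient.mk (projectivizationSetoid ℂ (Fin (n+1) → ℂ)) v : Pn n)) ⁻¹' S)
        Subtype.val_injective)
    rw [← heq]
    exact h.preimage continuous_subtype_val

lemma ne_zero_of_apply_ne_zero {n : ℕ} {v : Fin (n+1) → ℂ} {l₀ : Fin (n+1)}
    (h : v l₀ ≠ 0) : v ≠ 0 := fun h0 => h (by rw [h0]; rfl)

lemma isOpen_chartDomain {n : ℕ} (l₀ : Fin (n+1)) :
    IsOpen {p : Pn n | p.rep l₀ ≠ 0} := by
  rw [isOpen_Pn_iff]
  have : {v : Fin (n+1) → ℂ | ∃ h : v ≠ 0,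
      Projectivization.mk ℂ v h ∈ {p : Pn n | p.rep l₀ ≠ 0}} = {v | v l₀ ≠ 0} := by
    ext v
    constructor
    · rintro ⟨h, hr⟩
      exact (rep_ne_zero_iff h l₀).mp hr
    · intro h
      exact ⟨ne_zero_of_apply_ne_zero h, (rep_ne_zero_iff _ l₀).mpr h⟩
  rw [this]
  exact isOpen_ne_fun (continuous_apply l₀) continuous_const

lemma isOpen_chartBall {n : ℕ} (l₀ l : Fin (n+1)) (c : ℂ) (ε : ℝ) :
    IsOpen {p : Pn n | p.rep l₀ ≠ 0 ∧ dist (chart l₀ l p) c < ε} := by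
  rw [isOpen_Pn_iff]
  have : {v : Fin (n+1) → ℂ | ∃ h : v ≠ 0, Projectivization.mk ℂ v h ∈
      {p : Pn n | p.rep l₀ ≠ 0 ∧ dist (chart l₀ l p) c < ε}}
      = {v | v l₀ ≠ 0} ∩ (fun v : Fin (n+1) → ℂ => v l / v l₀) ⁻¹' Metric.ball c ε := by
    ext v
    constructor
    · rintro ⟨h, hr, hd⟩
      rw [chart_mk h] at hd
      exact ⟨(rep_ne_zero_iff h l₀).mp hr, hd⟩
    · rintro ⟨h0, hd⟩
      refine ⟨ne_zero_of_apply_ne_zero h0, (rep_ne_zero_iff _ l₀).mpr h0, ?_⟩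
      rw [chart_mk]
      exact hd
  rw [this]
  refine ContinuousOn.isOpen_inter_preimage ?_ ?_ Metric.isOpen_ball
  · exact ((continuous_apply l).continuousOn).div ((continuous_apply l₀).continuousOn)
      (fun v hv => hv)
  · exact isOpen_ne_fun (continuous_apply l₀) continuous_const

end Stmt9Aux

open Stmt9Aux in
/-- A sequence of holomorphic curves on a planar domain `D` into `ℙⁿ` converges
uniformly on compact subsets of `D` to a holomorphic curve `g` iff around every point
of `D` there is a fixed open neighbourhood `U` on which the curves admit reduced
representations whose components converge uniformly on compact subsets of `U` to the
components of a reduced representation of `g` on `U`. -/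
theorem stmt9 (n : ℕ)
    (D : Set ℂ) (hD : IsOpen D) (hDconn : IsPreconnected D) (hDne : D.Nonempty)
    (f : ℕ → ℂ → Pn n) (hf : ∀ ν, IsHolCurve n D (f ν))
    (g : ℂ → Pn n) (hg : IsHolCurve n D g) :
    TendstoOnCompacts D f g ↔
      ∀ a ∈ D, ∃ U : Set ℂ, IsOpen U ∧ a ∈ U ∧ U ⊆ D ∧
        ∃ F : ℕ → ℂ → Fin (n + 1) → ℂ, (∀ ν, IsRedRep n U (f ν) (F ν)) ∧
        ∃ G : ℂ → Fin (n + 1) → ℂ, IsRedRep n U g G ∧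
          ∀ l : Fin (n + 1), ∀ K ⊆ U, IsCompact K →
            TendstoUniformlyOn (fun ν z => F ν z l) (fun z => G z l) atTop K := by
  constructor
  · intro htend a ha
    obtain ⟨U₀, hU₀o, haU₀, hU₀D, G₀, hG₀⟩ := hg a ha
    obtain ⟨l₀, hl₀⟩ := Function.ne_iff.mp (hG₀.nonzero a haU₀)
    set U₁ : Set ℂ := U₀ ∩ (fun z => G₀ z l₀) ⁻¹' {(0:ℂ)}ᶜ with hU₁def
    have hU₁o : IsOpen U₁ := ContinuousOn.isOpen_inter_preimage
      ((hG₀.holo l₀).continuousOn) hU₀o isOpen_compl_singleton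
    have haU₁ : a ∈ U₁ := ⟨haU₀, hl₀⟩
    obtain ⟨r, hr, hballU₁⟩ := Metric.isOpen_iff.mp hU₁o a haU₁
    have hcb : Metric.closedBall a (r/2) ⊆ U₁ := fun z hz =>
      hballU₁ (lt_of_le_of_lt (Metric.mem_closedBall.mp hz) (by linarith))
    have hgC : ∀ z ∈ Metric.closedBall a (r/2), (g z).rep l₀ ≠ 0 := by
      intro z hz
      have hz₁ := hcb hz
      rw [hG₀.repr z hz₁.1]
      exact (rep_ne_zero_iff _ l₀).mpr hz₁.2
    have hev := htend (Metric.closedBall a (r/2))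
      (fun z hz => hU₀D (hcb hz).1) (isCompact_closedBall a (r/2))
      {p : Pn n | p.rep l₀ ≠ 0} (isOpen_chartDomain l₀)
      (by rintro _ ⟨z, hz, rfl⟩; exact hgC z hz)
    rw [Filter.eventually_atTop] at hev
    obtain ⟨N, hN⟩ := hev
    choose W hWo haW hWD FF hFF using fun ν => hf ν a ha
    set U : Set ℂ := Metric.ball a (r/2) ∩ ⋂ ν ∈ Finset.range N, W ν with hUdef
    have hUo : IsOpen U := Metric.isOpen_ball.inter
      (isOpen_biInter_finset fun ν _ => hWo ν)
    have haU : a ∈ U := ⟨Metric.mem_ball_self (by linarith),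
      Set.mem_biInter fun ν _ => haW ν⟩
    have hUcb : U ⊆ Metric.closedBall a (r/2) := fun z hz =>
      Metric.ball_subset_closedBall hz.1
    have hUU₁ : U ⊆ U₁ := fun z hz => hcb (hUcb hz)
    have hUD : U ⊆ D := fun z hz => hU₀D (hUU₁ hz).1
    have hgU : ∀ z ∈ U, (g z).rep l₀ ≠ 0 := fun z hz => hgC z (hUcb hz)
    have hfC : ∀ ν, N ≤ ν → ∀ z ∈ U, (f ν z).rep l₀ ≠ 0 := fun ν hν z hz =>
      hN ν hν ⟨z, hUcb hz, rfl⟩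
    set G : ℂ → Fin (n + 1) → ℂ := fun z l => chart l₀ l (g z) with hGdef
    set F : ℕ → ℂ → Fin (n + 1) → ℂ :=
      fun ν => if N ≤ ν then (fun z l => chart l₀ l (f ν z)) else FF ν with hFdef
    have hGeq : ∀ l, ∀ z ∈ U, G z l = G₀ z l / G₀ z l₀ := by
      intro l z hz
      have hz₁ := hUU₁ hz
      rw [hGdef]
      simp only
      rw [hG₀.repr z hz₁.1, chart_mk]
    have hGred : IsRedRep n U g G := by
      refine ⟨?_, ?_, ?_⟩
      · intro l
        have hd : DifferentiableOn ℂ (fun z => G₀ z l / G₀ z l₀) U :=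
          ((hG₀.holo l).mono (fun z hz => (hUU₁ hz).1)).div
            ((hG₀.holo l₀).mono (fun z hz => (hUU₁ hz).1)) (fun z hz => (hUU₁ hz).2)
        exact hd.congr (fun z hz => hGeq l z hz)
      · intro z hz h0
        have h1 : G z l₀ = 1 := chart_self _ _ (hgU z hz)
        rw [h0] at h1
        exact one_ne_zero h1.symm
      · intro z hz
        exact (mk_chart (g z) l₀ (hgU z hz)).symm
    have hFred : ∀ ν, IsRedRep n U (f ν) (F ν) := by
      intro ν
      by_cases hν : N ≤ ν
      · have hFeq : F ν = fun z l => chart l₀ l (f ν z) := by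
          rw [hFdef]; simp only [if_pos hν]
        rw [hFeq]
        refine ⟨?_, ?_, ?_⟩
        · intro l z hz
          obtain ⟨W', hW'o, hzW', hW'D, H, hH⟩ := hf ν z (hUD hz)
          have heq : ∀ z' ∈ U ∩ W', chart l₀ l (f ν z') = H z' l / H z' l₀ := by
            intro z' hz'
            rw [hH.repr z' hz'.2, chart_mk]
          have hdenom : H z l₀ ≠ 0 := by
            have h1 := hfC ν hν z hz
            rw [hH.repr z hzW'] at h1
            exact (rep_ne_zero_iff _ _).mp h1
          have hdiff : DifferentiableWithinAt ℂ (fun z' => H z' l / H z' l₀) (U ∩ W') z :=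
            (((hH.holo l) z hzW').mono Set.inter_subset_right).div
              (((hH.holo l₀) z hzW').mono Set.inter_subset_right) hdenom
          have hdiff2 := hdiff.congr (fun z' hz' => heq z' hz') (heq z ⟨hz, hzW'⟩)
          exact (differentiableWithinAt_inter (hW'o.mem_nhds hzW')).mp hdiff2
        · intro z hz h0
          have h1 : chart l₀ l₀ (f ν z) = 1 := chart_self _ _ (hfC ν hν z hz)
          have h2 := congrFun h0 l₀
          rw [h1] at h2
          exact one_ne_zero h2
        · intro z hz
          exact (mk_chart (f ν z) l₀ (hfC ν hν z hz)).symm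
      · have hFeq : F ν = FF ν := by rw [hFdef]; simp only [if_neg hν]
        rw [hFeq]
        have hsub : U ⊆ W ν := by
          intro z hz
          exact Set.mem_iInter₂.mp hz.2 ν (Finset.mem_range.mpr (lt_of_not_ge hν))
        exact ⟨fun i => ((hFF ν).holo i).mono hsub,
          fun z hz => (hFF ν).nonzero z (hsub hz),
          fun z hz => (hFF ν).repr z (hsub hz)⟩
    refine ⟨U, hUo, haU, hUD, F, hFred, G, hGred, ?_⟩
    intro l K hKU hKc
    rw [Metric.tendstoUniformlyOn_iff]
    intro ε hε
    have hGcont : ContinuousOn (fun z => G z l) U := (hGred.holo l).continuousOn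
    have key : ∀ z₀ ∈ K, ∃ d > 0, ∀ᶠ ν in atTop,
        ∀ z ∈ K ∩ Metric.closedBall z₀ d, dist (G z l) (chart l₀ l (f ν z)) < ε := by
      intro z₀ hz₀
      have hU_nhds : U ∈ 𝓝 z₀ := hUo.mem_nhds (hKU hz₀)
      have hcont : ContinuousAt (fun z => G z l) z₀ := hGcont.continuousAt hU_nhds
      have hev2 : ∀ᶠ z in 𝓝 z₀, z ∈ U ∧ dist (G z l) (G z₀ l) < ε/3 := by
        filter_upwards [hU_nhds,
          hcont.preimage_mem_nhds (Metric.ball_mem_nhds (ε := ε/3) (G z₀ l) (by linarith))] with z h1 h2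
        exact ⟨h1, Metric.mem_ball.mp h2⟩
      obtain ⟨d, hd, hdsub⟩ := Metric.eventually_nhds_iff_ball.mp hev2
      refine ⟨d/2, by linarith, ?_⟩
      have hcbsub : ∀ z ∈ Metric.closedBall z₀ (d/2), z ∈ Metric.ball z₀ d := fun z hz =>
        lt_of_le_of_lt (Metric.mem_closedBall.mp hz) (by linarith)
      set Kz := K ∩ Metric.closedBall z₀ (d/2) with hKzdef
      have hKzU : Kz ⊆ U := fun z hz => (hdsub z (hcbsub z hz.2)).1
      set Vb : Set (Pn n) := {p | p.rep l₀ ≠ 0 ∧ dist (chart l₀ l p) (G z₀ l) < 2*ε/3}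
        with hVbdef
      have hVb : IsOpen Vb := isOpen_chartBall l₀ l (G z₀ l) (2*ε/3)
      have hgV : g '' Kz ⊆ Vb := by
        rintro _ ⟨z, hz, rfl⟩
        have hzU := hKzU hz
        refine ⟨hgU z hzU, ?_⟩
        have hch : chart l₀ l (g z) = G z l := rfl
        rw [hch]
        have h1 := (hdsub z (hcbsub z hz.2)).2
        calc dist (G z l) (G z₀ l) < ε/3 := h1
          _ ≤ 2*ε/3 := by linarith
      have hevK := htend Kz (fun z hz => hUD (hKzU hz))
        (hKc.inter_right Metric.isClosed_closedBall) Vb hVb hgV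
      filter_upwards [hevK] with ν hν z hz
      obtain ⟨hrep, hdist⟩ := hν ⟨z, hz, rfl⟩
      have h1 := (hdsub z (hcbsub z hz.2)).2
      calc dist (G z l) (chart l₀ l (f ν z))
          ≤ dist (G z l) (G z₀ l) + dist (G z₀ l) (chart l₀ l (f ν z)) := dist_triangle _ _ _
        _ < ε/3 + 2*ε/3 := add_lt_add h1 (by rw [dist_comm]; exact hdist)
        _ = ε := by ring
    choose! d hdpos hdev using key
    obtain ⟨t, ht⟩ := hKc.elim_nhds_subcover' (fun z hz => Metric.ball z (d z))
      (fun z hz => Metric.ball_mem_nhds z (hdpos z hz))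
    have hall := (Filter.eventually_all_finset t).mpr (fun x hx => hdev x x.2)
    filter_upwards [hall, Filter.eventually_ge_atTop N] with ν h1 h2 z hz
    have hcov := ht hz
    rw [Set.mem_iUnion₂] at hcov
    obtain ⟨x, hx, hzx⟩ := hcov
    have hFeq : F ν z l = chart l₀ l (f ν z) := by
      rw [hFdef]; simp only [if_pos h2]
    rw [hFeq]
    exact h1 x hx z ⟨hz, Metric.ball_subset_closedBall hzx⟩
  · intro hloc K hKD hKc V hV hgK
    have key : ∀ a ∈ K, ∃ δ > 0, ∀ᶠ ν in atTop,
        ∀ z ∈ Metric.closedBall a δ, f ν z ∈ V := by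
      intro a haK
      obtain ⟨U, hUo, haU, hUD, F, hF, G, hG, hconv⟩ := hloc a (hKD haK)
      have hW : IsOpen {v : Fin (n+1) → ℂ | ∃ h : v ≠ 0, Projectivization.mk ℂ v h ∈ V} :=
        (isOpen_Pn_iff V).mp hV
      have hGa : G a ∈ {v : Fin (n+1) → ℂ | ∃ h : v ≠ 0, Projectivization.mk ℂ v h ∈ V} := by
        refine ⟨hG.nonzero a haU, ?_⟩
        rw [← hG.repr a haU]
        exact hgK ⟨a, haK, rfl⟩
      obtain ⟨ε, hε, hballW⟩ := Metric.isOpen_iff.mp hW (G a) hGa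
      have hGcont : ContinuousAt G a :=
        (continuousOn_pi.mpr (fun l => (hG.holo l).continuousOn)).continuousAt
          (hUo.mem_nhds haU)
      have hev : ∀ᶠ z in 𝓝 a, z ∈ U ∧ dist (G z) (G a) < ε/2 := by
        filter_upwards [hUo.mem_nhds haU,
          hGcont.preimage_mem_nhds (Metric.ball_mem_nhds (G a) (half_pos hε))] with z h1 h2
        exact ⟨h1, Metric.mem_ball.mp h2⟩
      obtain ⟨δ, hδ, hδsub⟩ := Metric.eventually_nhds_iff_ball.mp hev
      refine ⟨δ/2, by linarith, ?_⟩
      have hcbsub : ∀ z ∈ Metric.closedBall a (δ/2), z ∈ Metric.ball a δ := by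
        intro z hz
        exact lt_of_le_of_lt (Metric.mem_closedBall.mp hz) (by linarith)
      have hKa : Metric.closedBall a (δ/2) ⊆ U := fun z hz => (hδsub z (hcbsub z hz)).1
      have hunif : ∀ l : Fin (n+1), ∀ᶠ ν in atTop,
          ∀ z ∈ Metric.closedBall a (δ/2), dist (G z l) (F ν z l) < ε/2 := fun l =>
        (Metric.tendstoUniformlyOn_iff.mp
          (hconv l _ hKa (isCompact_closedBall a (δ/2)))) (ε/2) (half_pos hε)
      have hunif' := Filter.eventually_all.mpr hunif
      filter_upwards [hunif'] with ν hν z hz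
      have hzU := hKa hz
      have hdist : dist (F ν z) (G a) < ε := by
        have h1 : dist (F ν z) (G z) < ε/2 := by
          rw [dist_pi_lt_iff (half_pos hε)]
          intro l
          rw [dist_comm]
          exact hν l z hz
        have h2 := (hδsub z (hcbsub z hz)).2
        calc dist (F ν z) (G a) ≤ dist (F ν z) (G z) + dist (G z) (G a) := dist_triangle _ _ _
          _ < ε/2 + ε/2 := add_lt_add h1 h2
          _ = ε := add_halves ε
      obtain ⟨hne, hmem⟩ := hballW (Metric.mem_ball.mpr hdist)
      rw [(hF ν).repr z hzU]
      exact hmem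
    choose! δ hδpos hδev using key
    obtain ⟨t, ht⟩ := hKc.elim_nhds_subcover' (fun z hz => Metric.ball z (δ z))
      (fun z hz => Metric.ball_mem_nhds z (hδpos z hz))
    have hall := (Filter.eventually_all_finset t).mpr (fun x hx => hδev x x.2)
    filter_upwards [hall] with ν hν
    rintro _ ⟨z, hz, rfl⟩
    have hcov := ht hz
    rw [Set.mem_iUnion₂] at hcov
    obtain ⟨x, hx, hzx⟩ := hcov
    exact hν x hx z (Metric.ball_subset_closedBall hzx)

end
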